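/- For any alternating 3-form T on an n-dimensional real inner product space with orthonormal basis e_1,...,e_n, define the 4-form σ^T by σ^T(X,Y,Z,V) = (1/2) Σ_j ((e_j ⌟ T) ∧ (e_j ⌟ T))(X,Y,Z,V), where (e_j ⌟ T)(X,Y) = T(e_j,X,Y). Then the full contraction T_{abc} σ^T_{abci} = Σ_{a,b,c} T(e_a,e_b,e_c) σ^T(e_a,e_b,e_c,e_i) vanishes for every i. -/
import Mathlib


noncomputable section

/-- The 4-form `σ^T(X,Y,Z,V) = (1/2) Σ_j ((e_j ⌟ T) ∧ (e_j ⌟ T))(X,Y,Z,V)`,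
written in components with respect to the orthonormal basis `e_1, …, e_n`. -/
def sigmaT (n : ℕ) (T : Fin n → Fin n → Fin n → ℝ) (X Y Z V : Fin n) : ℝ :=
  (1/2 : ℝ) * ∑ j, (T j X Y * T j Z V - T j X Z * T j Y V + T j X V * T j Y Z
    + T j Y Z * T j X V - T j Y V * T j X Z + T j Z V * T j X Y)

/-- For any alternating 3-form `T`, the full contraction `T_{abc} σ^T_{abci}`
vanishes for every `i`. -/
theorem contraction_T_sigmaT_eq_zero (n : ℕ) (T : Fin n → Fin n → Fin n → ℝ)
    (hT1 : ∀ a b c, T a b c = - T b a c) (hT2 : ∀ a b c, T a b c = - T a c b) :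
    ∀ i, (∑ a, ∑ b, ∑ c, T a b c * sigmaT n T a b c i) = 0 := by
  intro i
  -- cyclic symmetry of T
  have hcyc : ∀ a b c, T c a b = T a b c := by
    intro a b c
    rw [hT1 c a b, hT2 a c b]; ring
  -- Expand the summand
  have hexp : ∀ a b c, T a b c * sigmaT n T a b c i
      = ∑ j, (T a b c * (T j a b * T j c i) - T a b c * (T j a c * T j b i)
          + T a b c * (T j a i * T j b c)) := by
    intro a b c
    simp only [sigmaT, Finset.mul_sum]
    exact Finset.sum_congr rfl fun j _ => by ring
  simp only [hexp, Finset.sum_add_distrib, Finset.sum_sub_distrib]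
  -- S2 = -S1
  have h2 : (∑ a, ∑ b, ∑ c, ∑ j, T a b c * (T j a c * T j b i))
      = -∑ a, ∑ b, ∑ c, ∑ j, T a b c * (T j a b * T j c i) := by
    have hbc : (∑ a, ∑ b, ∑ c, ∑ j, T a b c * (T j a c * T j b i))
        = ∑ a, ∑ b, ∑ c, ∑ j, T a c b * (T j a b * T j c i) :=
      Finset.sum_congr rfl fun a _ => Finset.sum_comm
    rw [hbc]
    simp only [← Finset.sum_neg_distrib]
    refine Finset.sum_congr rfl fun a _ => Finset.sum_congr rfl fun b _ =>
      Finset.sum_congr rfl fun c _ => Finset.sum_congr rfl fun j _ => ?_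
    rw [hT2 a c b]; ring
  -- S3 = S1
  have h3 : (∑ a, ∑ b, ∑ c, ∑ j, T a b c * (T j a i * T j b c))
      = ∑ a, ∑ b, ∑ c, ∑ j, T a b c * (T j a b * T j c i) := by
    have hc : (∑ a, ∑ b, ∑ c, ∑ j, T a b c * (T j a i * T j b c))
        = ∑ a, ∑ b, ∑ c, ∑ j, T c a b * (T j c i * T j a b) := by
      rw [Finset.sum_comm]
      exact Finset.sum_congr rfl fun _ _ => Finset.sum_comm
    rw [hc]
    refine Finset.sum_congr rfl fun a _ => Finset.sum_congr rfl fun b _ =>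
      Finset.sum_congr rfl fun c _ => Finset.sum_congr rfl fun j _ => ?_
    rw [hcyc a b c]; ring
  -- S1 = 0
  have h1 : (∑ a, ∑ b, ∑ c, ∑ j, T a b c * (T j a b * T j c i)) = 0 := by
    have hswap : (∑ a, ∑ b, ∑ c, ∑ j, T a b c * (T j a b * T j c i))
        = ∑ a, ∑ b, ∑ c, ∑ j, T a b j * (T c a b * T c j i) :=
      Finset.sum_congr rfl fun a _ => Finset.sum_congr rfl fun b _ => Finset.sum_comm
    have hneg : (∑ a, ∑ b, ∑ c, ∑ j, T a b j * (T c a b * T c j i))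
        = -∑ a, ∑ b, ∑ c, ∑ j, T a b c * (T j a b * T j c i) := by
      simp only [← Finset.sum_neg_distrib]
      refine Finset.sum_congr rfl fun a _ => Finset.sum_congr rfl fun b _ =>
        Finset.sum_congr rfl fun c _ => Finset.sum_congr rfl fun j _ => ?_
      rw [hT1 c j i, hcyc a b c, ← hcyc a b j]; ring
    have := hswap.trans hneg
    linarith
  rw [h2, h3, h1]
  ring
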